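/- For natural numbers n and k with 1 ≤ k ≤ n+1, the Abel-type sum ∑_{m=0}^{n+1-k} C(n+1-k, m) · (m+1)^{m-1} · (n-m)^{n-m-k} equals k·(n+1)^{n-k}/(k-1), provided k ≥ 2. Equivalently, (k-1) · ∑_{m=0}^{n+1-k} C(n+1-k, m) · (m+1)^{m-1} · (n-m)^{n-m-k} = k·(n+1)^{n-k}. -/

import Mathlib

open Finset Finset.Nat

noncomputable def gg (x : ℚ) (i : ℕ) : ℚ := (x + i)^i - i * (x + i)^(i-1)

noncomputable def Bf (n : ℕ) (x y : ℚ) : ℚ :=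
  ∑ p ∈ antidiagonal n, (n.choose p.1 : ℚ) * gg x p.1 * (y + p.2)^p.2

noncomputable def Ff (n : ℕ) (x y : ℚ) : ℚ :=
  ∑ p ∈ antidiagonal n, (n.choose p.1 : ℚ) * (x + p.1)^p.1 * (y + p.2)^p.2

noncomputable def Ef : ℕ → ℚ → ℚ
  | 0, _ => 1
  | (m+1), s => (s + (m+1))^(m+1) + (m+1) * Ef m (s+1)

lemma gg_zero (x : ℚ) : gg x 0 = 1 := by simp [gg]

lemma gg_succ (x : ℚ) (i : ℕ) : gg x (i+1) = x * (x + (i+1 : ℕ))^i := by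
  simp only [gg, Nat.add_sub_cancel, pow_succ]
  push_cast
  ring

lemma gg_mul_base (x : ℚ) (i : ℕ) : (x + i) * gg x i = x * (x + i)^i := by
  cases i with
  | zero => simp [gg]
  | succ m => rw [gg_succ, pow_succ]; ring

lemma L_I (n : ℕ) (x y : ℚ) :
    Ff (n+1) x y = Bf (n+1) x y + (n+1) * Ff n (x+1) y := by
  have h1 : Ff (n+1) x y - Bf (n+1) x y
      = ∑ p ∈ antidiagonal (n+1),
        ((n+1).choose p.1 : ℚ) * p.1 * (x + p.1)^(p.1 - 1) * (y + p.2)^p.2 := by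
    rw [Ff, Bf, ← Finset.sum_sub_distrib]
    refine Finset.sum_congr rfl fun p _ => ?_
    simp only [gg]
    ring
  rw [sum_antidiagonal_succ
    (f := fun p => ((n+1).choose p.1 : ℚ) * p.1 * (x + p.1)^(p.1 - 1) * (y + p.2)^p.2)] at h1
  simp only [Nat.cast_zero, mul_zero, zero_mul, zero_add, Nat.add_sub_cancel] at h1
  have h2 : ∀ p ∈ antidiagonal n,
      ((n+1).choose (p.1+1) : ℚ) * (p.1+1 : ℕ) * (x + (p.1+1 : ℕ))^p.1 * (y + p.2)^p.2
      = (n+1) * ((n.choose p.1 : ℚ) * ((x+1) + p.1)^p.1 * (y + p.2)^p.2) := by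
    intro p _
    have hc : ((n+1 : ℕ) : ℚ) * (n.choose p.1 : ℚ)
        = ((n+1).choose (p.1+1) : ℚ) * ((p.1+1 : ℕ) : ℚ) := by
      rw [← Nat.cast_mul, ← Nat.cast_mul, Nat.add_one_mul_choose_eq]
    have hb : (x + ((p.1+1 : ℕ) : ℚ)) = (x+1) + p.1 := by push_cast; ring
    rw [hb]
    push_cast at hc ⊢
    linear_combination ((x + 1 + (p.1:ℚ)) ^ p.1 * (y + (p.2:ℚ)) ^ p.2) * hc.symm
  rw [Finset.sum_congr rfl h2, ← Finset.mul_sum] at h1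
  rw [← Ff] at h1
  push_cast at h1 ⊢
  linarith

lemma L_II (n : ℕ) (x y : ℚ) :
    Bf (n+1) x y = (x + y + (n+1)) * Bf n x (y+1) + x * (Ff n (x+1) y - Ff n x (y+1)) := by
  set D : ℚ := ∑ p ∈ antidiagonal (n+1), (n.choose p.1 : ℚ) * gg x p.1 * (y + p.2)^p.2 with hD
  set S2 : ℚ := ∑ p ∈ antidiagonal n,
      (n.choose (p.1+1) : ℚ) * (x + ((p.1:ℚ)+1))^p.1 * (y + p.2)^p.2 with hS2
  have step1 : (x + y + ((n:ℚ)+1)) * Bf n x (y+1) - x * Ff n x (y+1) = D := by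
    have e1 : (x + y + ((n:ℚ)+1)) * Bf n x (y+1) - x * Ff n x (y+1)
        = ∑ p ∈ antidiagonal n, (n.choose p.1 : ℚ) * gg x p.1 * ((y+1) + p.2)^(p.2+1) := by
      rw [Bf, Ff, Finset.mul_sum, Finset.mul_sum, ← Finset.sum_sub_distrib]
      refine Finset.sum_congr rfl fun p hp => ?_
      have hij : (p.1 : ℚ) + p.2 = n := by
        have := mem_antidiagonal.mp hp
        exact_mod_cast congrArg (Nat.cast : ℕ → ℚ) this
      have hgb := gg_mul_base x p.1
      rw [pow_succ]
      linear_combination ((n.choose p.1 : ℚ) * ((y+1) + p.2)^p.2) * hgb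
        - ((n.choose p.1 : ℚ) * gg x p.1 * ((y+1) + p.2)^p.2) * hij
    rw [e1, hD, sum_antidiagonal_succ'
      (f := fun p => (n.choose p.1 : ℚ) * gg x p.1 * (y + p.2)^p.2)]
    have h0 : (n.choose (n+1) : ℚ) = 0 := by
      simp [Nat.choose_eq_zero_of_lt (Nat.lt_succ_self n)]
    rw [h0]
    simp only [zero_mul, zero_add]
    refine Finset.sum_congr rfl fun p _ => ?_
    have : y + ((p.2 + 1 : ℕ) : ℚ) = (y+1) + p.2 := by push_cast; ring
    rw [this]
  have step2 : D = (y + ((n:ℚ)+1))^(n+1) + x * S2 := by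
    rw [hD, sum_antidiagonal_succ
      (f := fun p => (n.choose p.1 : ℚ) * gg x p.1 * (y + p.2)^p.2)]
    simp only [Nat.choose_zero_right, Nat.cast_one, one_mul, gg_zero]
    rw [hS2, Finset.mul_sum]
    have : ∀ p ∈ antidiagonal n,
        (n.choose (p.1+1) : ℚ) * gg x (p.1+1) * (y + p.2)^p.2
        = x * ((n.choose (p.1+1) : ℚ) * (x + ((p.1:ℚ)+1))^p.1 * (y + p.2)^p.2) := by
      intro p _
      rw [gg_succ]
      push_cast
      ring
    rw [Finset.sum_congr rfl this]
    push_cast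
    ring
  have step3 : Bf (n+1) x y = (y + ((n:ℚ)+1))^(n+1) + x * Ff n (x+1) y + x * S2 := by
    rw [Bf, sum_antidiagonal_succ
      (f := fun p => ((n+1).choose p.1 : ℚ) * gg x p.1 * (y + p.2)^p.2)]
    simp only [Nat.choose_zero_right, Nat.cast_one, one_mul, gg_zero]
    have : ∀ p ∈ antidiagonal n,
        (((n+1)).choose (p.1+1) : ℚ) * gg x (p.1+1) * (y + p.2)^p.2
        = x * ((n.choose p.1 : ℚ) * ((x+1) + p.1)^p.1 * (y + p.2)^p.2)
          + x * ((n.choose (p.1+1) : ℚ) * (x + ((p.1:ℚ)+1))^p.1 * (y + p.2)^p.2) := by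
      intro p _
      rw [gg_succ, Nat.choose_succ_succ]
      have hb : x + ((p.1 + 1 : ℕ) : ℚ) = (x+1) + p.1 := by push_cast; ring
      push_cast
      rw [show x + ((p.1:ℚ)+1) = (x+1)+(p.1:ℚ) by ring]
      ring
    rw [Finset.sum_congr rfl this, Finset.sum_add_distrib, ← Finset.mul_sum, ← Finset.mul_sum,
      ← Ff]
    push_cast
    ring
  push_cast at step1 step2 step3 ⊢
  linarith

lemma abel (n : ℕ) :
    (∀ x y : ℚ, Bf n x y = (x+y+n)^n) ∧ (∀ x y : ℚ, Ff n x y = Ef n (x+y)) := by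
  induction n with
  | zero =>
    constructor <;> intro x y <;> simp [Bf, Ff, Ef, gg_zero]
  | succ n ih =>
    obtain ⟨hB, hF⟩ := ih
    have hB' : ∀ x y : ℚ, Bf (n+1) x y = (x+y+((n:ℚ)+1))^(n+1) := by
      intro x y
      rw [L_II, hB, hF, hF, show x+1+y = x+(y+1) by ring]
      push_cast
      ring
    constructor
    · intro x y
      rw [hB']
      all_goals push_cast
      all_goals ring
    · intro x y
      rw [L_I, hB', hF, show x+1+y = (x+y)+1 by ring]
      show _ = Ef (n+1) (x+y)
      simp only [Ef]
      all_goals push_cast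
      all_goals ring

lemma zp_gg_one (i : ℕ) : ((1:ℚ) + i)^((i:ℤ)-1) = gg 1 i := by
  cases i with
  | zero => simp [gg_zero]
  | succ m =>
    rw [gg_succ, one_mul, show ((m+1:ℕ):ℤ)-1 = (m:ℤ) by push_cast; ring, zpow_natCast]
    all_goals push_cast
    all_goals ring

lemma zp_gg (y : ℚ) (hy : y ≠ 0) (j : ℕ) : y * (y + j)^((j:ℤ)-1) = gg y j := by
  cases j with
  | zero =>
    simp only [Nat.cast_zero, add_zero, gg_zero]
    rw [show ((0:ℤ))-1 = -1 by norm_num, zpow_neg_one]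
    exact mul_inv_cancel₀ hy
  | succ m =>
    rw [gg_succ, show ((m+1:ℕ):ℤ)-1 = (m:ℤ) by push_cast; ring, zpow_natCast]
    all_goals push_cast
    all_goals ring

lemma key (N : ℕ) (y : ℚ) (hy : 0 < y) :
    y * (1 + y + N) * (∑ p ∈ antidiagonal N,
        (N.choose p.1 : ℚ) * (1+(p.1:ℚ))^((p.1:ℤ)-1) * (y+(p.2:ℚ))^((p.2:ℤ)-1))
    = (y+1) * (1+y+(N:ℚ))^N := by
  obtain ⟨hB, -⟩ := abel N
  have hterm : ∀ p ∈ antidiagonal N,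
      y * (1+y+(N:ℚ)) * ((N.choose p.1 : ℚ) * (1+(p.1:ℚ))^((p.1:ℤ)-1) * (y+(p.2:ℚ))^((p.2:ℤ)-1))
      = (N.choose p.1 : ℚ) * (1+(p.1:ℚ))^p.1 * gg y p.2
        + y * ((N.choose p.1 : ℚ) * gg 1 p.1 * (y+(p.2:ℚ))^p.2) := by
    intro p hp
    have hij : (p.1:ℚ) + p.2 = N := by
      exact_mod_cast congrArg (Nat.cast : ℕ → ℚ) (mem_antidiagonal.mp hp)
    have h1 : ((1:ℚ)+(p.1:ℚ)) ≠ 0 := by positivity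
    have h2 : (y+(p.2:ℚ)) ≠ 0 := by positivity
    have e1 : ((1:ℚ)+(p.1:ℚ))^(p.1:ℕ) = (1+(p.1:ℚ))^((p.1:ℤ)-1) * (1+(p.1:ℚ)) := by
      rw [zpow_sub_one₀ h1, zpow_natCast]
      field_simp
    have e2 : (y+(p.2:ℚ))^(p.2:ℕ) = (y+(p.2:ℚ))^((p.2:ℤ)-1) * (y+(p.2:ℚ)) := by
      rw [zpow_sub_one₀ h2, zpow_natCast]
      field_simp
    rw [← zp_gg y hy.ne' p.2, ← zp_gg_one p.1, e1, e2]
    linear_combination -(y * ((N.choose p.1:ℚ) * (1+(p.1:ℚ))^((p.1:ℤ)-1)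
      * (y+(p.2:ℚ))^((p.2:ℤ)-1))) * hij
  rw [Finset.mul_sum, Finset.sum_congr rfl hterm, Finset.sum_add_distrib, ← Finset.mul_sum]
  have hrefl : (∑ p ∈ antidiagonal N, (N.choose p.1 : ℚ) * (1+(p.1:ℚ))^p.1 * gg y p.2)
      = Bf N y 1 := by
    rw [Bf, ← Finset.Nat.sum_antidiagonal_swap
      (f := fun p => (N.choose p.1 : ℚ) * gg y p.1 * ((1:ℚ) + p.2)^p.2)]
    refine Finset.sum_congr rfl fun p hp => ?_
    have hc : N.choose p.2 = N.choose p.1 :=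
      Nat.choose_symm_of_eq_add (mem_antidiagonal.mp hp).symm |>.symm
    simp only [Prod.fst_swap, Prod.snd_swap, hc]
    ring
  have hBf1 : (∑ p ∈ antidiagonal N, (N.choose p.1 : ℚ) * gg 1 p.1 * (y+(p.2:ℚ))^p.2)
      = Bf N 1 y := rfl
  rw [hrefl, hBf1, hB, hB]
  ring

theorem stmt1 (n k : ℕ) (hk2 : 2 ≤ k) (hkn : k ≤ n + 1) :
    ((k : ℚ) - 1) * ∑ m ∈ Finset.range (n + 2 - k),
      (Nat.choose (n + 1 - k) m : ℚ) * ((m : ℚ) + 1) ^ ((m : ℤ) - 1) *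
        ((n : ℚ) - m) ^ ((n : ℤ) - m - k)
    = k * ((n : ℚ) + 1) ^ ((n : ℤ) - k) := by
  set N := n + 1 - k with hN
  have hrange : n + 2 - k = N + 1 := by omega
  set y : ℚ := (k:ℚ) - 1 with hy'
  have hy : 0 < y := by
    rw [hy']
    have : (2:ℚ) ≤ k := by exact_mod_cast hk2
    linarith
  have hNq : (N:ℚ) = (n:ℚ) + 1 - k := by
    rw [hN, Nat.cast_sub hkn]
    push_cast
    ring
  rw [hrange]
  have hsum : (∑ m ∈ Finset.range (N+1),
        (Nat.choose N m : ℚ) * ((m:ℚ)+1)^((m:ℤ)-1) * ((n:ℚ)-m)^((n:ℤ)-m-k))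
      = ∑ p ∈ antidiagonal N,
        (N.choose p.1 : ℚ) * (1+(p.1:ℚ))^((p.1:ℤ)-1) * (y+(p.2:ℚ))^((p.2:ℤ)-1) := by
    rw [Finset.Nat.sum_antidiagonal_eq_sum_range_succ_mk]
    refine Finset.sum_congr rfl fun m hm => ?_
    have hmN : m ≤ N := Nat.lt_succ_iff.mp (Finset.mem_range.mp hm)
    have hbase : (n:ℚ) - m = y + ((N - m : ℕ) : ℚ) := by
      rw [Nat.cast_sub hmN, hNq, hy']
      ring
    have hexp : (n:ℤ) - m - k = ((N - m : ℕ) : ℤ) - 1 := by omega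
    rw [hbase, hexp, show ((m:ℚ)+1) = 1 + (m:ℚ) by ring]
  rw [hsum]
  have hkey := key N y hy
  have h1y : 1 + y + (N:ℚ) = (n:ℚ) + 1 := by rw [hNq, hy']; ring
  rw [h1y] at hkey
  have hne : ((n:ℚ)+1) ≠ 0 := by positivity
  have hz : ((n:ℚ)+1)^((n:ℤ)-k) * ((n:ℚ)+1) = ((n:ℚ)+1)^(N:ℕ) := by
    rw [← zpow_natCast ((n:ℚ)+1) N, ← zpow_add_one₀ hne]
    congr 1
    omega
  have hy1 : y + 1 = (k:ℚ) := by rw [hy']; ring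
  apply mul_right_cancel₀ hne
  linear_combination hkey - (k:ℚ)*hz + ((n:ℚ)+1)^(N:ℕ) * hy1
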